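/- Let (L, δ)/(K, δ) be an extension of differential fields of characteristic p > 0 such that L/K is separably algebraic. Then C_L = L^p · C_K, i.e. the field of constants of L is generated as a field by the p-th powers of L together with the constants of K. -/
import Mathlib


set_option synthInstance.maxHeartbeats 1000000
set_option maxHeartbeats 1000000

open MvPolynomial
noncomputable section
variable {K : Type*} [Field K]

/-- order of a differential polynomial -/
def ordOf (f : MvPolynomial ℕ K) : ℕ := f.vars.sup id

/-- separant -/
def sep (f : MvPolynomial ℕ K) : MvPolynomial ℕ K := pderiv (ordOf f) f

/-- rank of a differential polynomial -/
def rankOf (f : MvPolynomial ℕ K) : ℕ × ℕ := (ordOf f, f.degreeOf (ordOf f))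

/-- the differential ideal generated by f -/
def diffIdeal (D : Derivation ℤ (MvPolynomial ℕ K) (MvPolynomial ℕ K))
    (f : MvPolynomial ℕ K) : Ideal (MvPolynomial ℕ K) :=
  Ideal.span (Set.range fun n : ℕ => (⇑D)^[n] f)

/-- saturation I : s^∞ -/
def saturation {R : Type*} [CommRing R] (J : Ideal R) (s : R) : Ideal R where
  carrier := {h | ∃ m : ℕ, s ^ m * h ∈ J}
  zero_mem' := ⟨0, by simp⟩
  add_mem' := by
    rintro a b ⟨m, hm⟩ ⟨n, hn⟩
    refine ⟨m + n, ?_⟩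
    have h : s ^ (m + n) * (a + b) = s ^ n * (s ^ m * a) + s ^ m * (s ^ n * b) := by ring
    rw [h]
    exact J.add_mem (J.mul_mem_left _ hm) (J.mul_mem_left _ hn)
  smul_mem' := by
    rintro c a ⟨m, hm⟩
    refine ⟨m, ?_⟩
    have h : s ^ m * (c • a) = c * (s ^ m * a) := by rw [smul_eq_mul]; ring
    rw [h]
    exact J.mul_mem_left _ hm

/-- evaluation of a differential polynomial at a point of K -/
def evalD (δ : Derivation ℤ K K) (a : K) (f : MvPolynomial ℕ K) : K :=
  MvPolynomial.eval (fun n => (⇑δ)^[n] a) f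

/-- the field of constants -/
def constants (δ : Derivation ℤ K K) : Subfield K where
  carrier := {a | δ a = 0}
  zero_mem' := by simp
  one_mem' := by simp
  add_mem' := by intro a b ha hb; simp only [Set.mem_setOf_eq] at *; rw [map_add, ha, hb, add_zero]
  mul_mem' := by
    intro a b ha hb; simp only [Set.mem_setOf_eq] at *
    rw [Derivation.leibniz, ha, hb]; simp
  neg_mem' := by intro a ha; simp only [Set.mem_setOf_eq] at *; rw [map_neg, ha, neg_zero]
  inv_mem' := by
    intro a ha
    simp only [Set.mem_setOf_eq] at *
    rcases eq_or_ne a 0 with rfl | h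
    · simp
    · have h1 : a * a⁻¹ = 1 := mul_inv_cancel₀ h
      have h2 : δ (a * a⁻¹) = 0 := by rw [h1]; exact δ.map_one_eq_zero
      rw [Derivation.leibniz, ha] at h2
      simp only [smul_eq_mul, mul_zero, add_zero, zero_mul, smul_zero] at h2
      exact (mul_eq_zero.mp h2).resolve_left h

/-- the SDCF axiom scheme -/
def SDCFAx (δ : Derivation ℤ K K) : Prop :=
  ∀ f g : MvPolynomial ℕ K, f ≠ 0 → g ≠ 0 → sep f ≠ 0 → ordOf g < ordOf f →
    ∃ a : K, evalD δ a f = 0 ∧ evalD δ a g ≠ 0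

/-- If `L/K` is a separably algebraic extension of differential fields of characteristic
`p > 0`, then `C_L = L^p · C_K`, the subfield of `L` generated by the `p`-th powers of
`L` together with the constants of `K`. -/
theorem stmt15 {K : Type*} [Field K] {L : Type*} [Field L] [Algebra K L]
    (p : ℕ) [Fact p.Prime] [CharP K p] [CharP L p]
    [Algebra.IsSeparable K L]
    (δ : Derivation ℤ K K) (δL : Derivation ℤ L L)
    (hcomp : ∀ a : K, δL (algebraMap K L a) = algebraMap K L (δ a)) :
    constants δL =
      Subfield.closure
        (((frobenius L p).fieldRange : Set L) ∪ (algebraMap K L '' {a : K | δ a = 0})) := by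
  set S : Set L := ((frobenius L p).fieldRange : Set L) ∪ (algebraMap K L '' {a : K | δ a = 0})
    with hS
  set M : Subfield L := Subfield.closure S with hM
  have hppos : p ≠ 0 := (Fact.out : p.Prime).ne_zero
  apply le_antisymm
  · intro c hcmem
    have hc : δL c = 0 := hcmem
    have hLp : ∀ x : L, x ^ p ∈ M := fun x => Subfield.subset_closure (Or.inl ⟨x, rfl⟩)
    have hCK : ∀ a : K, δ a = 0 → algebraMap K L a ∈ M := fun a ha =>
      Subfield.subset_closure (Or.inr ⟨a, ha, rfl⟩)
    have hpow : ∀ m : ℕ, δL (c ^ m) = 0 := by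
      intro m
      induction m with
      | zero => simp
      | succ m ih => rw [pow_succ, Derivation.leibniz, ih, hc]; simp
    set f := minpoly K c with hf
    have hfsep : f.Separable := Algebra.IsSeparable.isSeparable K c
    have hint : IsIntegral K c := IsSeparable.isIntegral (Algebra.IsSeparable.isSeparable K c)
    have hfmonic : f.Monic := minpoly.monic hint
    have hfne : f ≠ 0 := hfmonic.ne_zero
    have hfc : Polynomial.aeval c f = 0 := minpoly.aeval K c
    set n := f.natDegree with hn
    -- Step 1 : the coefficients of f are constants of δ
    set g : Polynomial K :=
      ∑ i ∈ Finset.range (n + 1), Polynomial.C (δ (f.coeff i)) * Polynomial.X ^ i with hg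
    have hgcoeff : ∀ m, g.coeff m = if m ≤ n then δ (f.coeff m) else 0 := by
      intro m
      rw [hg, Polynomial.finset_sum_coeff]
      simp only [Polynomial.coeff_C_mul, Polynomial.coeff_X_pow, mul_ite, mul_one, mul_zero]
      rw [Finset.sum_ite_eq (Finset.range (n + 1)) m fun i => δ (f.coeff i)]
      simp [Nat.lt_succ_iff]
    have hsum : (0 : L) = ∑ i ∈ Finset.range (n + 1),
        algebraMap K L (δ (f.coeff i)) * c ^ i := by
      have h1 : Polynomial.aeval c f = ∑ i ∈ Finset.range (n + 1),
          algebraMap K L (f.coeff i) * c ^ i := by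
        rw [Polynomial.aeval_eq_sum_range]
        exact Finset.sum_congr rfl fun i _ => Algebra.smul_def _ _
      calc (0 : L) = δL (Polynomial.aeval c f) := by rw [hfc, map_zero]
        _ = ∑ i ∈ Finset.range (n + 1), algebraMap K L (δ (f.coeff i)) * c ^ i := by
            rw [h1, map_sum]
            refine Finset.sum_congr rfl fun i _ => ?_
            rw [Derivation.leibniz, hpow i, smul_zero, zero_add, hcomp, smul_eq_mul, mul_comm]
    have haevalg : Polynomial.aeval c g = 0 := by
      rw [hg, map_sum]
      simp only [map_mul, Polynomial.aeval_C, map_pow, Polynomial.aeval_X]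
      exact hsum.symm
    have hgz : g = 0 := by
      by_contra hgz
      have hle := minpoly.degree_le_of_ne_zero K c hgz haevalg
      have hdeg : g.degree < f.degree := by
        rw [Polynomial.degree_eq_natDegree hfne, ← hn]
        rw [Polynomial.degree_lt_iff_coeff_zero]
        intro m hm
        rw [hgcoeff m]
        rcases eq_or_lt_of_le hm with hmn | hmn
        · rw [if_pos (le_of_eq hmn.symm), ← hmn]
          have : f.coeff n = 1 := hfmonic.coeff_natDegree
          rw [this, Derivation.map_one_eq_zero]
        · rw [if_neg (not_le.mpr hmn)]
      exact absurd hle (not_le.mpr hdeg)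
    have hconst : ∀ i, δ (f.coeff i) = 0 := by
      intro i
      by_cases hi : i ≤ n
      · have h := hgcoeff i
        rw [if_pos hi, hgz, Polynomial.coeff_zero] at h
        exact h.symm
      · rw [Polynomial.coeff_eq_zero_of_natDegree_lt (not_le.mp hi), map_zero]
    have hmem : ∀ i, algebraMap K L (f.coeff i) ∈ M := fun i => hCK _ (hconst i)
    -- Step 2 : lift f to a polynomial over M
    set fM : Polynomial M := ∑ i ∈ Finset.range (n + 1),
        Polynomial.C (⟨algebraMap K L (f.coeff i), hmem i⟩ : M) * Polynomial.X ^ i with hfM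
    have hmap : fM.map (algebraMap M L) = f.map (algebraMap K L) := by
      rw [hfM, Polynomial.map_sum]
      simp only [Polynomial.map_mul, Polynomial.map_C, Polynomial.map_pow, Polynomial.map_X]
      have hnd : (f.map (algebraMap K L)).natDegree < n + 1 := by
        have : (f.map (algebraMap K L)).natDegree ≤ f.natDegree := Polynomial.natDegree_map_le
        omega
      rw [Polynomial.as_sum_range' _ _ hnd]
      refine Finset.sum_congr rfl fun i _ => ?_
      rw [Polynomial.C_mul_X_pow_eq_monomial, Polynomial.coeff_map]
      rfl
    have haevalfM : Polynomial.aeval c fM = 0 := by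
      rw [Polynomial.aeval_def, ← Polynomial.eval_map, hmap, Polynomial.eval_map,
        ← Polynomial.aeval_def, hfc]
    have hsepfM : fM.Separable :=
      (Polynomial.separable_map (algebraMap M L)).mp (by rw [hmap]; exact hfsep.map)
    have hd1 : minpoly M c ∣ fM := minpoly.dvd M c haevalfM
    have hsepmin : (minpoly M c).Separable := hsepfM.of_dvd hd1
    -- Step 3 : minpoly M c divides (X - C c) ^ p
    set q : Polynomial M := Polynomial.X ^ p - Polynomial.C (⟨c ^ p, hLp c⟩ : M) with hq
    have hqmonic : q.Monic := Polynomial.monic_X_pow_sub_C _ hppos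
    have haevalq : Polynomial.aeval c q = 0 := by
      rw [hq, map_sub, map_pow, Polynomial.aeval_X, Polynomial.aeval_C]
      show c ^ p - ((⟨c ^ p, hLp c⟩ : M) : L) = 0
      simp
    have hintM : IsIntegral M c := ⟨q, hqmonic, by rwa [← Polynomial.aeval_def]⟩
    have hd2 : minpoly M c ∣ q := minpoly.dvd M c haevalq
    set d : Polynomial L := (minpoly M c).map (algebraMap M L) with hd
    have hdvd : d ∣ (Polynomial.X - Polynomial.C c) ^ p := by
      have hqmap : q.map (algebraMap M L) = (Polynomial.X - Polynomial.C c) ^ p := by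
        rw [hq, Polynomial.map_sub, Polynomial.map_pow, Polynomial.map_X, Polynomial.map_C,
          sub_pow_char, ← Polynomial.C_pow]
        rfl
      rw [hd, ← hqmap]
      exact Polynomial.map_dvd _ hd2
    obtain ⟨i, hip, hassoc⟩ := (dvd_prime_pow (Polynomial.prime_X_sub_C c) p).mp hdvd
    have hdmonic : d.Monic := (minpoly.monic hintM).map _
    have hdeq : d = (Polynomial.X - Polynomial.C c) ^ i :=
      Polynomial.eq_of_monic_of_associated hdmonic ((Polynomial.monic_X_sub_C c).pow i) hassoc
    have hi1 : i = 1 := by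
      have hdsep : d.Separable := hsepmin.map
      rcases Nat.lt_or_ge i 2 with h2 | h2
      · interval_cases i
        · exfalso
          have hdeg : d.natDegree = (minpoly M c).natDegree :=
            Polynomial.natDegree_map_eq_of_injective (algebraMap M L).injective _
          have hpos := minpoly.natDegree_pos hintM
          rw [hdeq, pow_zero] at hdeg
          simp at hdeg
          omega
        · rfl
      · exfalso
        have hsq : Squarefree d := hdsep.squarefree
        have : (Polynomial.X - Polynomial.C c) * (Polynomial.X - Polynomial.C c) ∣ d := by
          rw [hdeq, ← sq]
          exact pow_dvd_pow _ h2
        exact Polynomial.not_isUnit_X_sub_C c (hsq _ this)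
    have hdeg1 : d = Polynomial.X - Polynomial.C c := by rw [hdeq, hi1, pow_one]
    have hc0 : algebraMap M L ((minpoly M c).coeff 0) = -c := by
      have h := congrArg (fun r : Polynomial L => r.coeff 0) hdeg1
      simpa [hd, Polynomial.coeff_map] using h
    have hceq : c = ((-(minpoly M c).coeff 0 : M) : L) := by
      have : ((-(minpoly M c).coeff 0 : M) : L) = algebraMap M L (-(minpoly M c).coeff 0) := rfl
      rw [this, map_neg, hc0, neg_neg]
    rw [hM] at hceq ⊢
    rw [hceq]
    exact SetLike.coe_mem _
  · rw [Subfield.closure_le]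
    rintro x (⟨y, rfl⟩ | ⟨a, ha, rfl⟩)
    · show δL (frobenius L p y) = 0
      rw [frobenius_def, Derivation.leibniz_pow, nsmul_eq_mul, CharP.cast_eq_zero L p,
        zero_mul]
    · show δL (algebraMap K L a) = 0
      rw [hcomp, ha, map_zero]
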